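/- If (G, p) in ℝ^d is the image under an affine map of a super stable framework (G, p') in ℝ^D, then (G, p) is universally rigid. -/

import Mathlib

/-- The stress matrix of a stress `ω`: off-diagonal entries `−ω i j`, diagonal entries
`∑ j, ω i j`. -/
def stressMatrix {n : ℕ} (ω : Fin n → Fin n → ℝ) : Matrix (Fin n) (Fin n) ℝ :=
  Matrix.of fun i j => if i = j then ∑ k, ω i k else -ω i j

/-- Frameworks are equivalent: same edge lengths. -/
def FrameworkEquiv {V : Type*} {d D : ℕ} (G : SimpleGraph V)
    (p : V → EuclideanSpace ℝ (Fin d)) (q : V → EuclideanSpace ℝ (Fin D)) : Prop :=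
  ∀ i j, G.Adj i j → dist (p i) (p j) = dist (q i) (q j)

/-- Frameworks are congruent: same distances for all pairs of vertices. -/
def FrameworkCongruent {V : Type*} {d D : ℕ}
    (p : V → EuclideanSpace ℝ (Fin d)) (q : V → EuclideanSpace ℝ (Fin D)) : Prop :=
  ∀ i j, dist (p i) (p j) = dist (q i) (q j)

/-- Universal rigidity of `(G, p)` in `ℝ^d`: every equivalent framework in any `ℝ^D`, `D ≥ d`,
is congruent to `(G, p)`. -/
def UniversallyRigid {V : Type*} {d : ℕ} (G : SimpleGraph V)
    (p : V → EuclideanSpace ℝ (Fin d)) : Prop :=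
  ∀ D : ℕ, d ≤ D → ∀ q : V → EuclideanSpace ℝ (Fin D),
    FrameworkEquiv G p q → FrameworkCongruent p q

/-- The edge directions of `(G, p)` lie on a conic at infinity if there is a nonzero symmetric
matrix `Q` with `(p i − p j)ᵀ Q (p i − p j) = 0` for all edges `ij`. -/
def OnConicAtInfinity {n D : ℕ} (G : SimpleGraph (Fin n))
    (p : Fin n → EuclideanSpace ℝ (Fin D)) : Prop :=
  ∃ Q : Matrix (Fin D) (Fin D) ℝ, Q ≠ 0 ∧ Q.IsSymm ∧ ∀ i j, G.Adj i j →
    dotProduct (fun k => p i k - p j k)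
      (Matrix.mulVec Q (fun k => p i k - p j k)) = 0

/-- `(G, p)` is super stable in `ℝ^D`: it has an equilibrium stress whose stress matrix is
positive semidefinite of rank `n − D − 1`, and its edge directions do not lie on a conic at
infinity. -/
def SuperStable {n D : ℕ} (G : SimpleGraph (Fin n))
    (p : Fin n → EuclideanSpace ℝ (Fin D)) : Prop :=
  (∃ ω : Fin n → Fin n → ℝ, (∀ i j, ω i j = ω j i) ∧ (∀ i j, ¬ G.Adj i j → ω i j = 0) ∧
    (∀ i, ∑ j, ω i j • (p i - p j) = 0) ∧
    (stressMatrix ω).PosSemidef ∧ (stressMatrix ω).rank = n - D - 1) ∧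
  ¬ OnConicAtInfinity G p

/- ### Auxiliary lemmas -/

lemma stress_mulVec {n : ℕ} (ω : Fin n → Fin n → ℝ) (hii : ∀ i, ω i i = 0)
    (x : Fin n → ℝ) (i : Fin n) :
    (stressMatrix ω).mulVec x i = ∑ j, ω i j * (x i - x j) := by
  have h1 : ∀ j, (stressMatrix ω) i j * x j
      = (if i = j then (∑ k, ω i k) * x i else 0) + (-(ω i j * x j)) := by
    intro j
    by_cases h : i = j
    · subst h; simp [stressMatrix, hii]
    · simp [stressMatrix, h]
  unfold Matrix.mulVec dotProduct
  simp only [h1, Finset.sum_add_distrib, Finset.sum_ite_eq, Finset.mem_univ, if_pos,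
    Finset.sum_neg_distrib]
  simp only [mul_sub, Finset.sum_sub_distrib, ← Finset.sum_mul]
  ring

lemma stress_quad {n : ℕ} (ω : Fin n → Fin n → ℝ) (hsym : ∀ i j, ω i j = ω j i)
    (hii : ∀ i, ω i i = 0) (x : Fin n → ℝ) :
    ∑ i, ∑ j, ω i j * (x i - x j) ^ 2
      = 2 * dotProduct x ((stressMatrix ω).mulVec x) := by
  have key : ∀ i j, ω i j * (x i - x j) ^ 2
      = ω i j * ((x i - x j) * x i) - ω i j * ((x i - x j) * x j) := by
    intro i j; ring
  simp only [key, Finset.sum_sub_distrib]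
  have swap : ∑ i, ∑ j, ω i j * ((x i - x j) * x j)
      = - ∑ i, ∑ j, ω i j * ((x i - x j) * x i) := by
    rw [Finset.sum_comm, ← Finset.sum_neg_distrib]
    refine Finset.sum_congr rfl fun i _ => ?_
    rw [← Finset.sum_neg_distrib]
    refine Finset.sum_congr rfl fun j _ => ?_
    rw [hsym j i]; ring
  rw [swap, sub_neg_eq_add, ← two_mul]
  congr 1
  unfold dotProduct
  refine Finset.sum_congr rfl fun i _ => ?_
  rw [stress_mulVec ω hii, Finset.mul_sum]
  refine Finset.sum_congr rfl fun j _ => ?_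
  ring

lemma span_diff_top {n D : ℕ} (G : SimpleGraph (Fin n)) (p : Fin n → EuclideanSpace ℝ (Fin D))
    (h : ¬ OnConicAtInfinity G p) :
    Submodule.span ℝ {v : EuclideanSpace ℝ (Fin D) | ∃ i j, v = p i - p j} = ⊤ := by
  by_contra hne
  set W := Submodule.span ℝ {v : EuclideanSpace ℝ (Fin D) | ∃ i j, v = p i - p j}
  have hbot : Wᗮ ≠ ⊥ := by
    intro hb
    exact hne (Submodule.orthogonal_eq_bot_iff.mp hb)
  obtain ⟨u, hu, hune⟩ := Submodule.exists_mem_ne_zero_of_ne_bot hbot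
  apply h
  refine ⟨Matrix.of fun k l => u k * u l, ?_, ?_, ?_⟩
  · intro h0
    obtain ⟨k, hk⟩ : ∃ k, u k ≠ 0 := by
      by_contra hall
      push_neg at hall
      exact hune (by ext k; exact hall k)
    have := congrFun (congrFun h0 k) k
    simp at this
    exact hk (by nlinarith [sq_nonneg (u k)])
  · ext k l; simp [Matrix.IsSymm, mul_comm]
  · intro i j hij
    have horth : inner ℝ (p i - p j) u = (0 : ℝ) :=
      (Submodule.mem_orthogonal W u).mp hu _ (Submodule.subset_span ⟨i, j, rfl⟩)
    have hinner : ∑ l, u l * (p i l - p j l) = 0 := by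
      rw [← horth, PiLp.inner_apply]
      refine Finset.sum_congr rfl fun l _ => ?_
      show u l * ((p i - p j) l) = _
      rw [PiLp.sub_apply, RCLike.inner_apply]
      simp [mul_comm]
    show dotProduct _ _ = 0
    set v : Fin D → ℝ := fun k => p i k - p j k with hv
    have h1 : ∀ k, (∑ l, (u k * u l) * v l) = u k * ∑ l, u l * v l := by
      intro k; rw [Finset.mul_sum]; exact Finset.sum_congr rfl fun l _ => by ring
    have h2 : dotProduct v ((Matrix.of fun k l => u k * u l).mulVec v)
        = (∑ k, v k * u k) * ∑ l, u l * v l := by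
      unfold dotProduct Matrix.mulVec dotProduct
      simp only [Matrix.of_apply, h1, ← mul_assoc, Finset.sum_mul]
    rw [h2, hinner, mul_zero]

lemma lin_indep_cons {n D : ℕ} (hn : 0 < n) (p' : Fin n → EuclideanSpace ℝ (Fin D))
    (hspan : Submodule.span ℝ {v : EuclideanSpace ℝ (Fin D) | ∃ i j, v = p' i - p' j} = ⊤) :
    LinearIndependent ℝ (Fin.cons (fun _ => (1:ℝ)) (fun l i => p' i l) :
      Fin (D+1) → (Fin n → ℝ)) := by
  rw [Fintype.linearIndependent_iff]
  intro g hg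
  have hev : ∀ i : Fin n, g 0 + ∑ l : Fin D, g l.succ * p' i l = 0 := by
    intro i
    have := congrFun hg i
    simp only [Finset.sum_apply, Pi.smul_apply, Pi.zero_apply, smul_eq_mul] at this
    rw [Fin.sum_univ_succ] at this
    simpa [Fin.cons] using this
  set v : EuclideanSpace ℝ (Fin D) := WithLp.toLp 2 (fun l : Fin D => g l.succ) with hv
  have hvzero : v = 0 := by
    have hfun : ∀ w ∈ {w : EuclideanSpace ℝ (Fin D) | ∃ i j, w = p' i - p' j},
        inner ℝ v w = (0:ℝ) := by
      rintro w ⟨i, j, rfl⟩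
      have h1 := hev i
      have h2 := hev j
      have : ∑ l : Fin D, g l.succ * (p' i l - p' j l) = 0 := by
        simp only [mul_sub, Finset.sum_sub_distrib]
        linarith
      rw [PiLp.inner_apply]
      rw [← this]
      refine Finset.sum_congr rfl fun l _ => ?_
      rw [PiLp.sub_apply, RCLike.inner_apply]
      simp [hv, mul_comm]
    have hval : inner ℝ v v = (0:ℝ) := by
      have hmem : v ∈ Submodule.span ℝ {w : EuclideanSpace ℝ (Fin D) | ∃ i j, w = p' i - p' j} := by
        rw [hspan]; trivial
      refine Submodule.span_induction (p := fun w _ => inner ℝ v w = (0:ℝ)) hfun (by simp)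
        (fun a b _ _ ha hb => by dsimp only at *; rw [inner_add_right, ha, hb, add_zero])
        (fun c a _ ha => by dsimp only at *; rw [real_inner_smul_right, ha, mul_zero]) hmem
    exact inner_self_eq_zero.mp hval
  intro m
  refine Fin.cases ?_ ?_ m
  · have := hev ⟨0, hn⟩
    have hz : ∀ l : Fin D, g l.succ = 0 := fun l => congrArg (fun w : EuclideanSpace ℝ (Fin D) => w l) hvzero
    simpa [hz] using this
  · intro l; exact congrArg (fun w : EuclideanSpace ℝ (Fin D) => w l) hvzero

lemma dist_sq_eq {m : ℕ} (x y : EuclideanSpace ℝ (Fin m)) :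
    dist x y ^ 2 = ∑ k, (x k - y k) ^ 2 := by
  rw [EuclideanSpace.dist_eq, Real.sq_sqrt (by positivity)]
  exact Finset.sum_congr rfl fun k _ => by rw [Real.dist_eq, sq_abs]

lemma lin_apply {D d : ℕ} (T : EuclideanSpace ℝ (Fin D) →ₗ[ℝ] EuclideanSpace ℝ (Fin d))
    (v : EuclideanSpace ℝ (Fin D)) (k : Fin d) :
    T v k = ∑ l, v l * T (EuclideanSpace.single l 1) k := by
  have hv : v = ∑ l, v l • EuclideanSpace.single l (1:ℝ) := by
    ext m
    rw [WithLp.ofLp_sum, Finset.sum_apply]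
    simp [EuclideanSpace.single_apply, eq_comm]
  conv_lhs => rw [hv, map_sum]
  rw [WithLp.ofLp_sum, Finset.sum_apply]
  exact Finset.sum_congr rfl fun l _ => by rw [map_smul]; rfl

lemma quad_expand {D m : ℕ} (M : Fin m → Fin D → ℝ) (v : Fin D → ℝ) :
    ∑ a, ∑ b, (∑ k, M k a * M k b) * (v a * v b) = ∑ k, (∑ l, M k l * v l) ^ 2 := by
  have hsq : ∀ k, (∑ l, M k l * v l) ^ 2 = ∑ a, ∑ b, (M k a * M k b) * (v a * v b) := by
    intro k
    rw [sq, Finset.sum_mul_sum]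
    refine Finset.sum_congr rfl fun a _ => Finset.sum_congr rfl fun b _ => by ring
  simp only [hsq]
  have h1 : ∀ a, ∑ b, ∑ k, (M k a * M k b) * (v a * v b)
      = ∑ k, ∑ b, (M k a * M k b) * (v a * v b) := fun a => Finset.sum_comm
  have h2 : ∀ a b, (∑ k, M k a * M k b) * (v a * v b)
      = ∑ k, (M k a * M k b) * (v a * v b) := fun a b => Finset.sum_mul _ _ _
  simp only [h2, h1]
  rw [Finset.sum_comm]

/-- If `(G, p)` in `ℝ^d` is the image under an affine map of a super stable framework
`(G, p')` in `ℝ^D`, then `(G, p)` is universally rigid. -/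
theorem universallyRigid_of_affine_image_superStable {n d D : ℕ} (G : SimpleGraph (Fin n))
    (p' : Fin n → EuclideanSpace ℝ (Fin D)) (hss : SuperStable G p')
    (A : EuclideanSpace ℝ (Fin D) →ᵃ[ℝ] EuclideanSpace ℝ (Fin d))
    (p : Fin n → EuclideanSpace ℝ (Fin d)) (hp : ∀ i, p i = A (p' i)) :
    UniversallyRigid G p := by
  obtain ⟨⟨ω, hsym, hsupp, heq, hpsd, hrank⟩, hconic⟩ := hss
  rcases Nat.eq_zero_or_pos n with hn | hn
  · subst hn; intro D' _ q _ i j; exact i.elim0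
  intro D' hdD' q hequiv
  have hii : ∀ i, ω i i = 0 := fun i => hsupp i i (G.irrefl)
  set Ω := stressMatrix ω with hΩdef
  have hspan := span_diff_top G p' hconic
  have hind := lin_indep_cons hn p' hspan
  set f : Fin (D+1) → (Fin n → ℝ) := Fin.cons (fun _ => 1) (fun l i => p' i l) with hf
  -- kernel facts
  have hone : Ω.mulVec (fun _ => 1) = 0 := by
    funext i; rw [stress_mulVec ω hii]; simp
  have heqk : ∀ i k, ∑ j, ω i j * (p' i k - p' j k) = 0 := by
    intro i k
    calc ∑ j, ω i j * (p' i k - p' j k) = ∑ j, (ω i j • (p' i - p' j)) k :=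
          Finset.sum_congr rfl fun j _ => rfl
      _ = (∑ j, ω i j • (p' i - p' j)) k := by rw [WithLp.ofLp_sum, Finset.sum_apply]
      _ = 0 := by rw [heq i]; rfl
  have hcol : ∀ l, Ω.mulVec (fun i => p' i l) = 0 := by
    intro l; funext i; rw [stress_mulVec ω hii]; exact heqk i l
  have hle : Submodule.span ℝ (Set.range f) ≤ LinearMap.ker Ω.mulVecLin := by
    rw [Submodule.span_le]
    rintro x ⟨m, rfl⟩
    rw [SetLike.mem_coe, LinearMap.mem_ker]
    refine Fin.cases ?_ ?_ m
    · rw [hf]; simpa [Matrix.mulVecLin_apply] using hone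
    · intro l; rw [hf]; simpa [Matrix.mulVecLin_apply] using hcol l
  have hnD : D + 1 ≤ n := by
    have := hind.fintype_card_le_finrank
    simpa using this
  have hkerdim : Module.finrank ℝ (LinearMap.ker Ω.mulVecLin) = D + 1 := by
    have h1 := LinearMap.finrank_range_add_finrank_ker Ω.mulVecLin
    have h2 : Matrix.rank Ω = n - D - 1 := hrank
    rw [Matrix.rank] at h2
    rw [h2, Module.finrank_pi, Fintype.card_fin] at h1
    omega
  have hspdim : Module.finrank ℝ (Submodule.span ℝ (Set.range f)) = D + 1 := by
    rw [finrank_span_eq_card hind, Fintype.card_fin]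
  have hker : LinearMap.ker Ω.mulVecLin = Submodule.span ℝ (Set.range f) :=
    (Submodule.eq_of_le_of_finrank_le hle (by rw [hkerdim, hspdim])).symm
  -- the columns of p are in the kernel
  have hdiff_p : ∀ i j (k : Fin d), p i k - p j k = (A.linear (p' i - p' j)) k := by
    intro i j k
    have h := A.linearMap_vsub (p' i) (p' j)
    rw [vsub_eq_sub, vsub_eq_sub] at h
    rw [hp i, hp j, h]
    rfl
  have hp_col : ∀ k : Fin d, Ω.mulVec (fun i => p i k) = 0 := by
    intro k; funext i
    rw [stress_mulVec ω hii]
    calc ∑ j, ω i j * (p i k - p j k) = ∑ j, (A.linear (ω i j • (p' i - p' j))) k := by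
          refine Finset.sum_congr rfl fun j _ => ?_
          rw [hdiff_p i j k, map_smul]; rfl
      _ = (∑ j, A.linear (ω i j • (p' i - p' j))) k := by rw [WithLp.ofLp_sum, Finset.sum_apply]
      _ = (A.linear (∑ j, ω i j • (p' i - p' j))) k := by rw [map_sum]
      _ = 0 := by rw [heq i, map_zero]; rfl
  -- energy argument: columns of q are in the kernel
  have hq_col : ∀ k : Fin D', Ω.mulVec (fun i => q i k) = 0 := by
    have hswap : ∀ (m : ℕ) (r : Fin n → EuclideanSpace ℝ (Fin m)),
        ∑ i, ∑ j, ω i j * dist (r i) (r j) ^ 2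
          = ∑ k : Fin m, 2 * dotProduct (fun i => r i k) (Ω.mulVec (fun i => r i k)) := by
      intro m r
      have h1 : ∀ i j, ω i j * dist (r i) (r j) ^ 2
          = ∑ k : Fin m, ω i j * (r i k - r j k) ^ 2 := by
        intro i j; rw [dist_sq_eq, Finset.mul_sum]
      simp only [h1]
      have h2 : ∀ i, (∑ j, ∑ k : Fin m, ω i j * (r i k - r j k) ^ 2)
          = ∑ k : Fin m, ∑ j, ω i j * (r i k - r j k) ^ 2 := fun i => Finset.sum_comm
      simp only [h2]
      rw [Finset.sum_comm]
      exact Finset.sum_congr rfl fun k _ => stress_quad ω hsym hii _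
    have hEq : ∑ i, ∑ j, ω i j * dist (q i) (q j) ^ 2
        = ∑ i, ∑ j, ω i j * dist (p i) (p j) ^ 2 := by
      refine Finset.sum_congr rfl fun i _ => Finset.sum_congr rfl fun j _ => ?_
      by_cases h : G.Adj i j
      · rw [hequiv i j h]
      · rw [hsupp i j h, zero_mul, zero_mul]
    have hzero : ∑ k : Fin D',
        2 * dotProduct (fun i => q i k) (Ω.mulVec (fun i => q i k)) = 0 := by
      rw [← hswap D' q, hEq, hswap d p]
      refine Finset.sum_eq_zero fun k _ => ?_
      rw [hp_col k, dotProduct_zero, mul_zero]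
    have hnonneg : ∀ k : Fin D', 0 ≤
        2 * dotProduct (fun i => q i k) (Ω.mulVec (fun i => q i k)) := by
      intro k
      have := hpsd.dotProduct_mulVec_nonneg (fun i => q i k)
      simp only [star_trivial] at this
      linarith
    intro k
    have h0 : 2 * dotProduct (fun i => q i k) (Ω.mulVec (fun i => q i k)) = 0 :=
      (Finset.sum_eq_zero_iff_of_nonneg (fun k _ => hnonneg k)).mp hzero k (Finset.mem_univ k)
    have h0' : dotProduct (fun i => q i k) (Ω.mulVec (fun i => q i k)) = 0 := by
      linarith
    exact (hpsd.dotProduct_mulVec_zero_iff (fun i => q i k)).mp (by simpa using h0')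
  -- representation of q as affine image of p'
  have hq_rep : ∃ M : Fin D' → Fin D → ℝ, ∀ i j (k : Fin D'),
      q i k - q j k = ∑ l, M k l * (p' i l - p' j l) := by
    have hmem : ∀ k : Fin D', ∃ c : Fin (D+1) → ℝ, ∑ m, c m • f m = (fun i => q i k) := by
      intro k
      rw [← Submodule.mem_span_range_iff_exists_fun, ← hker, LinearMap.mem_ker, Matrix.mulVecLin_apply]
      exact hq_col k
    choose c hc using hmem
    refine ⟨fun k l => c k l.succ, ?_⟩
    intro i j k
    have hrep : ∀ i, q i k = c k 0 + ∑ l : Fin D, c k l.succ * p' i l := by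
      intro i
      have := congrFun (hc k) i
      simp only [Finset.sum_apply, Pi.smul_apply, smul_eq_mul] at this
      rw [Fin.sum_univ_succ] at this
      rw [← this, hf]
      simp [Fin.cons]
    rw [hrep i, hrep j]
    simp only [mul_sub, Finset.sum_sub_distrib]
    ring
  obtain ⟨M, hM⟩ := hq_rep
  -- representation of p via the linear part of A
  set N : Fin d → Fin D → ℝ := fun k l => A.linear (EuclideanSpace.single l 1) k with hN
  have hNrep : ∀ i j (k : Fin d), p i k - p j k = ∑ l, N k l * (p' i l - p' j l) := by
    intro i j k
    rw [hdiff_p i j k, lin_apply]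
    refine Finset.sum_congr rfl fun l _ => ?_
    rw [PiLp.sub_apply, mul_comm]
  -- conic at infinity argument
  set Qm : Matrix (Fin D) (Fin D) ℝ :=
    Matrix.of fun a b => (∑ k, M k a * M k b) - (∑ k, N k a * N k b) with hQm
  have hquad : ∀ v : Fin D → ℝ, dotProduct v (Qm.mulVec v)
      = (∑ k, (∑ l, M k l * v l) ^ 2) - (∑ k, (∑ l, N k l * v l) ^ 2) := by
    intro v
    have hdot : dotProduct v (Qm.mulVec v) = ∑ a, ∑ b, Qm a b * (v a * v b) := by
      unfold dotProduct Matrix.mulVec dotProduct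
      rw [Finset.sum_congr rfl fun a (_ : a ∈ Finset.univ) => (by
        rw [Finset.mul_sum]
        exact Finset.sum_congr rfl fun b _ => by ring :
        v a * (∑ b, Qm a b * v b) = ∑ b, Qm a b * (v a * v b))]
    rw [hdot]
    simp only [hQm, Matrix.of_apply, sub_mul, Finset.sum_sub_distrib]
    rw [quad_expand M v, quad_expand N v]
  have hQ0 : Qm = 0 := by
    by_contra h0
    refine hconic ⟨Qm, h0, ?_, ?_⟩
    · ext a b
      simp only [Matrix.transpose_apply, hQm, Matrix.of_apply]
      have h1 : ∑ k, M k b * M k a = ∑ k, M k a * M k b :=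
        Finset.sum_congr rfl fun k _ => mul_comm _ _
      have h2 : ∑ k, N k b * N k a = ∑ k, N k a * N k b :=
        Finset.sum_congr rfl fun k _ => mul_comm _ _
      rw [h1, h2]
    · intro i j hij
      have hd : dist (q i) (q j) ^ 2 = dist (p i) (p j) ^ 2 := by
        rw [hequiv i j hij]
      rw [hquad]
      have hqd : ∑ k, (∑ l, M k l * (p' i l - p' j l)) ^ 2 = dist (q i) (q j) ^ 2 := by
        rw [dist_sq_eq]
        exact Finset.sum_congr rfl fun k _ => by rw [← hM i j k]
      have hpd : ∑ k, (∑ l, N k l * (p' i l - p' j l)) ^ 2 = dist (p i) (p j) ^ 2 := by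
        rw [dist_sq_eq]
        exact Finset.sum_congr rfl fun k _ => by rw [← hNrep i j k]
      rw [hqd, hpd, hd, sub_self]
  -- conclusion
  intro i j
  have hsq : dist (p i) (p j) ^ 2 = dist (q i) (q j) ^ 2 := by
    have h0 : dotProduct (fun l => p' i l - p' j l)
        (Qm.mulVec (fun l => p' i l - p' j l)) = 0 := by
      rw [hQ0]; simp
    rw [hquad] at h0
    have hqd : ∑ k, (∑ l, M k l * (p' i l - p' j l)) ^ 2 = dist (q i) (q j) ^ 2 := by
      rw [dist_sq_eq]
      exact Finset.sum_congr rfl fun k _ => by rw [← hM i j k]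
    have hpd : ∑ k, (∑ l, N k l * (p' i l - p' j l)) ^ 2 = dist (p i) (p j) ^ 2 := by
      rw [dist_sq_eq]
      exact Finset.sum_congr rfl fun k _ => by rw [← hNrep i j k]
    rw [hqd, hpd] at h0
    linarith
  calc dist (p i) (p j) = Real.sqrt (dist (p i) (p j) ^ 2) := (Real.sqrt_sq dist_nonneg).symm
    _ = Real.sqrt (dist (q i) (q j) ^ 2) := by rw [hsq]
    _ = dist (q i) (q j) := Real.sqrt_sq dist_nonneg
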